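/- Let X be a finite-dimensional G-invariant subspace of L. Then every G-equivariant linear map T : X → L is the restriction of an invariant operator: there exists D ∈ A^G with D|_X = T. In other words, A^G|_X = Hom_G(X, L). (Equivariant Jacobson density, Proposition 1.11.) -/

import Mathlib

open Polynomial in
lemma aux_aeval_injective {L : Type*} [AddCommGroup L] [Module ℂ L]
    (φ : Module.End ℂ L) (hinj : ∀ c : ℂ, Function.Injective (φ - c • (1 : Module.End ℂ L)))
    (Q : ℂ[X]) (hQ : Q ≠ 0) : Function.Injective (Polynomial.aeval φ Q) := by
  suffices H : ∀ (n : ℕ) (Q : ℂ[X]), Q ≠ 0 → Q.natDegree = n →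
      Function.Injective (Polynomial.aeval φ Q) from H _ Q hQ rfl
  clear hQ Q
  intro n
  induction n using Nat.strong_induction_on with
  | _ n IH =>
  intro Q hQ hn
  rcases Nat.eq_zero_or_pos n with h0 | hpos
  · subst h0
    have hC : Q = C (Q.coeff 0) := Polynomial.eq_C_of_natDegree_eq_zero hn
    have hc0 : Q.coeff 0 ≠ 0 := by
      intro h; apply hQ; rw [hC, h, map_zero]
    rw [hC, Polynomial.aeval_C]
    intro x y hxy
    rw [Module.algebraMap_end_apply, Module.algebraMap_end_apply] at hxy
    exact smul_right_injective L hc0 hxy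
  · have hdeg : 0 < Q.degree := by
      rw [← Polynomial.natDegree_pos_iff_degree_pos, hn]; exact hpos
    obtain ⟨r, hr⟩ := IsAlgClosed.exists_root Q (by exact ne_of_gt hdeg)
    obtain ⟨Q₁, hQ₁⟩ := (Polynomial.dvd_iff_isRoot).mpr hr
    have hQ₁ne : Q₁ ≠ 0 := by
      intro h; apply hQ; rw [hQ₁, h, mul_zero]
    have hXr : (X - C r : ℂ[X]) ≠ 0 := Polynomial.X_sub_C_ne_zero r
    have hnd : Q₁.natDegree < n := by
      have := Polynomial.natDegree_mul hXr hQ₁ne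
      rw [← hQ₁, Polynomial.natDegree_X_sub_C, hn] at this
      omega
    have hIH : Function.Injective (Polynomial.aeval φ Q₁) := IH _ hnd Q₁ hQ₁ne rfl
    have hfac : Function.Injective (Polynomial.aeval φ (X - C r)) := by
      have : Polynomial.aeval φ (X - C r) = φ - r • 1 := by
        rw [map_sub, Polynomial.aeval_X, Polynomial.aeval_C,
          Module.algebraMap_end_eq_smul_id]
        rfl
      rw [this]; exact hinj r
    rw [hQ₁, map_mul]
    intro x y hxy
    rw [Module.End.mul_apply, Module.End.mul_apply] at hxy
    exact hIH (hfac hxy)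

open Polynomial in
lemma aux_dixmier {L : Type*} [AddCommGroup L] [Module ℂ L]
    (hcount : ∃ s : Set L, s.Countable ∧ Submodule.span ℂ s = ⊤)
    (A : Subalgebra ℂ (Module.End ℂ L))
    (hAirr : ∀ p : Submodule ℂ L, (∀ T ∈ A, ∀ x ∈ p, T x ∈ p) → p = ⊥ ∨ p = ⊤)
    (φ : Module.End ℂ L) (hcomm : ∀ T ∈ A, φ * T = T * φ) :
    ∃ c : ℂ, φ = c • (1 : Module.End ℂ L) := by
  rcases subsingleton_or_nontrivial L with hL | hL
  · exact ⟨0, LinearMap.ext fun x => Subsingleton.elim _ _⟩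
  by_cases hbij : ∀ c : ℂ, Function.Bijective (φ - c • (1 : Module.End ℂ L))
  · -- contradiction via cardinality
    exfalso
    obtain ⟨v, hv⟩ := exists_ne (0 : L)
    choose u hu using fun c : ℂ => (hbij c).2 v
    -- u c is a preimage of v under φ - c • 1
    have hind : LinearIndependent ℂ u := by
      rw [linearIndependent_iff']
      intro s g hg i hi
      by_contra hgi
      set Q : ℂ[X] := ∑ c ∈ s, C (g c) * ∏ d ∈ s.erase c, (X - C d) with hQdef
      have key : ∀ c ∈ s, (aeval φ (∏ d ∈ s.erase c, (X - C d))) v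
          = (aeval φ (∏ d ∈ s, (X - C d))) (u c) := by
        intro c hc
        rw [← Finset.prod_erase_mul s _ hc, map_mul, Module.End.mul_apply]
        congr 1
        have : aeval φ (X - C c) = φ - c • (1 : Module.End ℂ L) := by
          rw [map_sub, Polynomial.aeval_X, Polynomial.aeval_C,
            Module.algebraMap_end_eq_smul_id]
          rfl
        rw [this, hu c]
      have hQv : (aeval φ Q) v = 0 := by
        have h1 : (aeval φ Q) v = ∑ c ∈ s, g c • (aeval φ (∏ d ∈ s.erase c, (X - C d))) v := by
          rw [hQdef, map_sum, LinearMap.sum_apply]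
          refine Finset.sum_congr rfl fun c hc => ?_
          rw [map_mul, Polynomial.aeval_C, Module.End.mul_apply,
            Module.algebraMap_end_apply]
        rw [h1]
        have h2 : ∑ c ∈ s, g c • (aeval φ (∏ d ∈ s.erase c, (X - C d))) v
            = (aeval φ (∏ d ∈ s, (X - C d))) (∑ c ∈ s, g c • u c) := by
          rw [map_sum]
          refine Finset.sum_congr rfl fun c hc => ?_
          rw [key c hc, LinearMap.map_smul]
        rw [h2, hg, map_zero]
      have hQne : Q ≠ 0 := by
        intro h0
        have heval : Polynomial.eval i Q = g i * ∏ d ∈ s.erase i, (i - d) := by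
          rw [hQdef, Polynomial.eval_finset_sum]
          rw [Finset.sum_eq_single i]
          · rw [Polynomial.eval_mul, Polynomial.eval_C, Polynomial.eval_prod]
            congr 1
            exact Finset.prod_congr rfl fun d _ => by
              rw [Polynomial.eval_sub, Polynomial.eval_X, Polynomial.eval_C]
          · intro c hc hci
            rw [Polynomial.eval_mul, Polynomial.eval_prod]
            have : i ∈ s.erase c := Finset.mem_erase.mpr ⟨Ne.symm hci, hi⟩
            rw [Finset.prod_eq_zero this (by
              rw [Polynomial.eval_sub, Polynomial.eval_X, Polynomial.eval_C, sub_self])]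
            rw [mul_zero]
          · intro h; exact absurd hi h
        have : Polynomial.eval i Q ≠ 0 := by
          rw [heval]
          refine mul_ne_zero hgi (Finset.prod_ne_zero_iff.mpr fun d hd => ?_)
          exact sub_ne_zero_of_ne (Ne.symm (Finset.mem_erase.mp hd).1)
        rw [h0] at this
        simp at this
      have hQinj : Function.Injective (aeval φ Q) :=
        aux_aeval_injective φ (fun c => (hbij c).1) Q hQne
      apply hv
      apply hQinj
      rw [hQv, map_zero]
    -- cardinality contradiction
    obtain ⟨s, hsc, hsspan⟩ := hcount
    have h1 := hind.cardinal_lift_le_rank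
    have h2 : Module.rank ℂ L ≤ Cardinal.aleph0 := by
      have h3 := rank_span_le (R := ℂ) s
      rw [hsspan, rank_top] at h3
      refine h3.trans ?_
      rw [Cardinal.mk_le_aleph0_iff]
      exact hsc.to_subtype
    have h4 : Cardinal.mk ℂ ≤ Cardinal.aleph0 := by
      rw [← Cardinal.lift_le_aleph0]
      exact h1.trans (Cardinal.lift_le_aleph0.mpr h2)
    rw [Cardinal.mk_complex] at h4
    exact absurd h4 (not_le.mpr Cardinal.aleph0_lt_continuum)
  · push_neg at hbij
    obtain ⟨c, hc⟩ := hbij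
    refine ⟨c, ?_⟩
    set ψ := φ - c • (1 : Module.End ℂ L) with hψ
    have hcomm' : ∀ T ∈ A, ∀ x : L, ψ (T x) = T (ψ x) := by
      intro T hT x
      have h := hcomm T hT
      simp only [hψ, LinearMap.sub_apply, LinearMap.smul_apply, Module.End.one_apply,
        LinearMap.map_smul]
      have : φ (T x) = T (φ x) := by
        have := congrArg (fun f : Module.End ℂ L => f x) h
        simpa [Module.End.mul_apply] using this
      rw [this, map_sub, LinearMap.map_smul]
    have hker : ∀ T ∈ A, ∀ x ∈ LinearMap.ker ψ, T x ∈ LinearMap.ker ψ := by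
      intro T hT x hx
      rw [LinearMap.mem_ker] at *
      rw [hcomm' T hT, hx, map_zero]
    have hrange : ∀ T ∈ A, ∀ x ∈ LinearMap.range ψ, T x ∈ LinearMap.range ψ := by
      rintro T hT x ⟨y, rfl⟩
      exact ⟨T y, hcomm' T hT y⟩
    rcases hAirr _ hker with hk | hk
    · rcases hAirr _ hrange with hr | hr
      · -- range = ⊥ : ψ = 0, so ker = ⊤, contradiction unless... directly φ = c•1
        apply sub_eq_zero.mp
        apply LinearMap.ext
        intro x
        have : ψ x ∈ LinearMap.range ψ := ⟨x, rfl⟩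
        rw [hr] at this
        simpa [hψ] using this
      · -- ker = ⊥ and range = ⊤: bijective, contradiction
        exact absurd ⟨LinearMap.ker_eq_bot.mp hk, LinearMap.range_eq_top.mp hr⟩ hc
    · -- ker = ⊤
      apply sub_eq_zero.mp
      apply LinearMap.ext
      intro x
      have : x ∈ LinearMap.ker ψ := hk ▸ Submodule.mem_top
      simpa [hψ] using this

lemma aux_trans {L : Type*} [AddCommGroup L] [Module ℂ L]
    (A : Subalgebra ℂ (Module.End ℂ L))
    (hAirr : ∀ p : Submodule ℂ L, (∀ T ∈ A, ∀ x ∈ p, T x ∈ p) → p = ⊥ ∨ p = ⊤)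
    (y : L) (hy : y ≠ 0) (t : L) : ∃ b ∈ A, b y = t := by
  let p : Submodule ℂ L :=
    { carrier := {z | ∃ b ∈ A, b y = z}
      add_mem' := by
        rintro z₁ z₂ ⟨b₁, h₁, rfl⟩ ⟨b₂, h₂, rfl⟩
        exact ⟨b₁ + b₂, add_mem h₁ h₂, rfl⟩
      zero_mem' := ⟨0, zero_mem _, rfl⟩
      smul_mem' := by
        rintro c z ⟨b, h, rfl⟩
        exact ⟨c • b, Subalgebra.smul_mem A h c, rfl⟩ }
  have hinv : ∀ T ∈ A, ∀ x ∈ p, T x ∈ p := by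
    rintro T hT x ⟨b, hb, rfl⟩
    exact ⟨T * b, mul_mem hT hb, rfl⟩
  rcases hAirr p hinv with hbot | htop
  · exfalso
    have hyp : y ∈ p := ⟨1, one_mem A, rfl⟩
    rw [hbot] at hyp
    exact hy hyp
  · have : t ∈ p := htop ▸ Submodule.mem_top
    exact this

lemma aux_density {L : Type*} [AddCommGroup L] [Module ℂ L]
    (hcount : ∃ s : Set L, s.Countable ∧ Submodule.span ℂ s = ⊤)
    (A : Subalgebra ℂ (Module.End ℂ L))
    (hAirr : ∀ p : Submodule ℂ L, (∀ T ∈ A, ∀ x ∈ p, T x ∈ p) → p = ⊥ ∨ p = ⊤) :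
    ∀ (n : ℕ) (v : Fin n → L), LinearIndependent ℂ v → ∀ w : Fin n → L,
      ∃ a ∈ A, ∀ i, a (v i) = w i := by
  intro n
  induction n with
  | zero =>
    intro v _ w
    exact ⟨0, zero_mem _, fun i => i.elim0⟩
  | succ n IH =>
    intro v hv w
    -- Step A : for any independent family, can kill the first n and not the last
    have stepA : ∀ v' : Fin (n+1) → L, LinearIndependent ℂ v' →
        ∃ a ∈ A, (∀ i : Fin n, a (v' i.castSucc) = 0) ∧ a (v' (Fin.last n)) ≠ 0 := by
      intro v' hv'
      by_contra hcon
      push_neg at hcon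
      have hvc : LinearIndependent ℂ (fun i : Fin n => v' i.castSucc) :=
        hv'.comp Fin.castSucc (Fin.castSucc_injective n)
      -- well-definedness
      have wd : ∀ a ∈ A, ∀ b ∈ A,
          (∀ i : Fin n, a (v' i.castSucc) = b (v' i.castSucc)) →
          a (v' (Fin.last n)) = b (v' (Fin.last n)) := by
        intro a ha b hb hab
        have h := hcon (a - b) (sub_mem ha hb) (fun i => by
          rw [LinearMap.sub_apply, hab i, sub_self])
        rw [LinearMap.sub_apply, sub_eq_zero] at h
        exact h
      have hex : ∀ (i : Fin n) (x : L), ∃ a ∈ A, ∀ j : Fin n,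
          a (v' j.castSucc) = if j = i then x else 0 := fun i x =>
        IH _ hvc (fun j => if j = i then x else 0)
      choose pick hpickA hpick using hex
      -- the commuting endomorphisms
      let f : Fin n → Module.End ℂ L := fun i =>
        { toFun := fun x => pick i x (v' (Fin.last n))
          map_add' := fun x y => by
            have h1 : pick i x + pick i y ∈ A := add_mem (hpickA i x) (hpickA i y)
            have h := wd _ (hpickA i (x + y)) _ h1 (fun j => by
              rw [LinearMap.add_apply, hpick, hpick, hpick]
              by_cases hj : j = i <;> simp [hj])
            simpa [LinearMap.add_apply] using h
          map_smul' := fun cc x => by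
            have h1 : cc • pick i x ∈ A := Subalgebra.smul_mem A (hpickA i x) cc
            have h := wd _ (hpickA i (cc • x)) _ h1 (fun j => by
              rw [LinearMap.smul_apply, hpick, hpick]
              by_cases hj : j = i <;> simp [hj])
            simpa [LinearMap.smul_apply] using h }
      have hfc : ∀ i, ∀ T ∈ A, (f i) * T = T * (f i) := by
        intro i T hT
        apply LinearMap.ext
        intro x
        have h1 : T * pick i x ∈ A := mul_mem hT (hpickA i x)
        have h := wd _ (hpickA i (T x)) _ h1 (fun j => by
          rw [Module.End.mul_apply, hpick, hpick]
          by_cases hj : j = i <;> simp [hj])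
        simpa [Module.End.mul_apply, f] using h
      choose c hc using fun i => aux_dixmier hcount A hAirr (f i) (hfc i)
      -- derive the contradictory linear relation
      have hbA : ∑ i, pick i (v' i.castSucc) ∈ A :=
        sum_mem (fun i _ => hpickA _ _)
      have hb : ∀ j : Fin n, (∑ i, pick i (v' i.castSucc)) (v' j.castSucc)
          = v' j.castSucc := by
        intro j
        rw [LinearMap.sum_apply]
        rw [Finset.sum_eq_single j]
        · rw [hpick]; simp
        · intro i _ hij
          rw [hpick]; simp [Ne.symm hij]
        · intro h; exact absurd (Finset.mem_univ j) h
      have hrel : v' (Fin.last n) = ∑ i, c i • v' i.castSucc := by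
        have h := wd _ hbA _ (one_mem A) (fun j => by
          rw [hb]; rfl)
        rw [Module.End.one_apply] at h
        rw [← h, LinearMap.sum_apply]
        refine Finset.sum_congr rfl fun i _ => ?_
        have : pick i (v' i.castSucc) (v' (Fin.last n)) = (f i) (v' i.castSucc) := rfl
        rw [this, hc i]
        simp
      -- contradiction with linear independence
      have hnot := hv'.notMem_span_image (s := {j : Fin (n+1) | j ≠ Fin.last n})
        (x := Fin.last n) (by simp)
      apply hnot
      rw [hrel]
      refine Submodule.sum_mem _ fun i _ => Submodule.smul_mem _ _ ?_
      apply Submodule.subset_span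
      exact ⟨i.castSucc, Fin.castSucc_lt_last i |>.ne, rfl⟩
    -- Step B : idempotent-like elements for each index
    have step : ∀ k : Fin (n+1), ∃ a ∈ A, (∀ j, j ≠ k → a (v j) = 0) ∧ a (v k) ≠ 0 := by
      intro k
      obtain ⟨a, haA, h0, hlast⟩ := stepA (v ∘ Equiv.swap k (Fin.last n))
        (hv.comp _ (Equiv.injective _))
      refine ⟨a, haA, ?_, ?_⟩
      · intro j hj
        have hm : Equiv.swap k (Fin.last n) j ≠ Fin.last n := by
          intro h
          apply hj
          have := congrArg (Equiv.swap k (Fin.last n)) h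
          rw [Equiv.swap_apply_self, Equiv.swap_apply_right] at this
          exact this
        have h := h0 ((Equiv.swap k (Fin.last n) j).castPred hm)
        rw [Function.comp_apply, Fin.castSucc_castPred, Equiv.swap_apply_self] at h
        exact h
      · have := hlast
        rw [Function.comp_apply, Equiv.swap_apply_right] at this
        exact this
    choose a haA ha0 hak using step
    choose b hbA hb using fun k => aux_trans A hAirr _ (hak k) (w k)
    refine ⟨∑ k, b k * a k, sum_mem (fun k _ => mul_mem (hbA k) (haA k)), ?_⟩
    intro i
    rw [LinearMap.sum_apply, Finset.sum_eq_single i]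
    · rw [Module.End.mul_apply]; exact hb i
    · intro k _ hki
      rw [Module.End.mul_apply, ha0 k i (Ne.symm hki), map_zero]
    · intro h; exact absurd (Finset.mem_univ i) h


/-- Conjugation action of a group element on endomorphisms of `L`:
`g · T := ρ(g) ∘ T ∘ ρ(g)⁻¹`. -/
def conjEnd {G L : Type*} [Group G] [AddCommGroup L] [Module ℂ L]
    (ρ : Representation ℂ G L) (g : G) :
    Module.End ℂ L →ₗ[ℂ] Module.End ℂ L where
  toFun T := ρ g ∘ₗ T ∘ₗ ρ g⁻¹
  map_add' T S := by ext v; simp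
  map_smul' c T := by ext v; simp

/-- **Equivariant Jacobson density (Proposition 1.11).**
Let `G` act on a complex vector space `L` of countable dimension via `ρ`; the
action is locally finite and completely reducible.  Let `A` be a unital
subalgebra of `End ℂ L` acting irreducibly on `L`, invariant under the
conjugation `G`-action, and locally finite and completely reducible as a
`G`-module.  If `X` is a finite-dimensional `G`-invariant subspace of `L`,
then every `G`-equivariant linear map `T : X → L` is the restriction of a
`G`-invariant operator `D ∈ A^G`. -/
theorem equivariant_jacobson_density
    {G L : Type*} [Group G] [AddCommGroup L] [Module ℂ L]
    (ρ : Representation ℂ G L)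
    -- `L` has countable dimension
    (hcount : ∃ s : Set L, s.Countable ∧ Submodule.span ℂ s = ⊤)
    -- the `G`-action on `L` is locally finite
    (hlocfin : ∀ v : L, ∃ Y : Submodule ℂ L,
      (∀ g : G, ∀ y ∈ Y, ρ g y ∈ Y) ∧ FiniteDimensional ℂ Y ∧ v ∈ Y)
    -- the `G`-action on `L` is completely reducible
    (hcompred : ∀ p : Submodule ℂ L, (∀ g : G, ∀ y ∈ p, ρ g y ∈ p) →
      ∃ q : Submodule ℂ L, (∀ g : G, ∀ y ∈ q, ρ g y ∈ q) ∧ IsCompl p q)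
    (A : Subalgebra ℂ (Module.End ℂ L))
    -- `A` acts irreducibly on `L`
    (hAirr : ∀ p : Submodule ℂ L, (∀ T ∈ A, ∀ x ∈ p, T x ∈ p) → p = ⊥ ∨ p = ⊤)
    -- `A` is invariant under the conjugation `G`-action
    (hAG : ∀ g : G, ∀ T ∈ A, conjEnd ρ g T ∈ A)
    -- the `G`-action on `A` is locally finite
    (hAlocfin : ∀ T ∈ A, ∃ E : Submodule ℂ (Module.End ℂ L),
      E ≤ Subalgebra.toSubmodule A ∧ (∀ g : G, ∀ S ∈ E, conjEnd ρ g S ∈ E) ∧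
      FiniteDimensional ℂ E ∧ T ∈ E)
    -- the `G`-action on `A` is completely reducible
    (hAcompred : ∀ p : Submodule ℂ (Module.End ℂ L),
      p ≤ Subalgebra.toSubmodule A → (∀ g : G, ∀ S ∈ p, conjEnd ρ g S ∈ p) →
      ∃ q : Submodule ℂ (Module.End ℂ L), q ≤ Subalgebra.toSubmodule A ∧
        (∀ g : G, ∀ S ∈ q, conjEnd ρ g S ∈ q) ∧
        p ⊓ q = ⊥ ∧ p ⊔ q = Subalgebra.toSubmodule A)
    -- `X` is a finite-dimensional `G`-invariant subspace of `L`
    (X : Submodule ℂ L) (hXfin : FiniteDimensional ℂ X)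
    (hXinv : ∀ g : G, ∀ x ∈ X, ρ g x ∈ X)
    -- `T : X → L` is `G`-equivariant
    (T : X →ₗ[ℂ] L)
    (hT : ∀ (g : G) (x : X), T ⟨ρ g ↑x, hXinv g ↑x x.2⟩ = ρ g (T x)) :
    ∃ D ∈ A, (∀ g : G, conjEnd ρ g D = D) ∧ ∀ x : X, D ↑x = T x := by
  classical
  -- Step 1: find any D₀ ∈ A restricting to T, by Jacobson density
  let bX := Module.finBasis ℂ X
  have hvv : LinearIndependent ℂ (fun i => (bX i : L)) :=
    bX.linearIndependent.map' X.subtype X.ker_subtype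
  obtain ⟨D₀, hD₀A, hD₀⟩ := aux_density hcount A hAirr _ _ hvv (fun i => T (bX i))
  have hres₀ : ∀ x : X, D₀ ↑x = T x := by
    have h : (D₀ ∘ₗ X.subtype) = T := by
      apply Module.Basis.ext bX
      intro i
      exact hD₀ i
    intro x
    exact LinearMap.congr_fun h x
  -- Step 2: average using complete reducibility of A
  have hgg : ∀ (g : G) (y : L), ρ g (ρ g⁻¹ y) = y := by
    intro g y
    rw [← Module.End.mul_apply, ← map_mul, mul_inv_cancel, map_one, Module.End.one_apply]
  have hconj_apply : ∀ (g : G) (D : Module.End ℂ L) (y : L),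
      (conjEnd ρ g D) y = ρ g (D (ρ g⁻¹ y)) := fun g D y => rfl
  let p : Submodule ℂ (Module.End ℂ L) :=
    { carrier := {D | D ∈ A ∧ ∀ x : X, D ↑x = 0}
      add_mem' := by
        rintro D₁ D₂ ⟨h₁, e₁⟩ ⟨h₂, e₂⟩
        exact ⟨add_mem h₁ h₂, fun x => by rw [LinearMap.add_apply, e₁ x, e₂ x, add_zero]⟩
      zero_mem' := ⟨zero_mem _, fun x => rfl⟩
      smul_mem' := by
        rintro cc D ⟨h, e⟩
        exact ⟨Subalgebra.smul_mem A h cc, fun x => by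
          rw [LinearMap.smul_apply, e x, smul_zero]⟩ }
  have hpA : p ≤ Subalgebra.toSubmodule A := fun D hD => hD.1
  have hpG : ∀ g : G, ∀ S ∈ p, conjEnd ρ g S ∈ p := by
    rintro g S ⟨hSA, hS0⟩
    refine ⟨hAG g S hSA, fun x => ?_⟩
    rw [hconj_apply]
    have hx' : ρ g⁻¹ ↑x ∈ X := hXinv g⁻¹ ↑x x.2
    rw [hS0 ⟨ρ g⁻¹ ↑x, hx'⟩, map_zero]
  obtain ⟨q, hqA, hqG, hpq, hsup⟩ := hAcompred p hpA hpG
  have hD₀' : D₀ ∈ p ⊔ q := by rw [hsup]; exact hD₀A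
  obtain ⟨Dp, hDp, Dq, hDq, hsum⟩ := Submodule.mem_sup.mp hD₀'
  have hres : ∀ x : X, Dq ↑x = T x := by
    intro x
    have h : Dp ↑x + Dq ↑x = D₀ ↑x := by rw [← LinearMap.add_apply, hsum]
    rw [hDp.2 x, zero_add] at h
    rw [h, hres₀]
  refine ⟨Dq, hqA hDq, ?_, hres⟩
  intro g
  have hEq : conjEnd ρ g Dq - Dq ∈ q := sub_mem (hqG g Dq hDq) hDq
  have hEp : conjEnd ρ g Dq - Dq ∈ p := by
    refine ⟨sub_mem (hqA (hqG g Dq hDq)) (hqA hDq), fun x => ?_⟩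
    rw [LinearMap.sub_apply, hconj_apply]
    have hx' : ρ g⁻¹ ↑x ∈ X := hXinv g⁻¹ ↑x x.2
    rw [hres ⟨ρ g⁻¹ ↑x, hx'⟩]
    have h2 := hT g ⟨ρ g⁻¹ ↑x, hx'⟩
    rw [← h2]
    have h3 : (⟨ρ g (ρ g⁻¹ ↑x), hXinv g _ hx'⟩ : X) = x := Subtype.ext (hgg g ↑x)
    rw [h3, hres x, sub_self]
  have : conjEnd ρ g Dq - Dq ∈ p ⊓ q := Submodule.mem_inf.mpr ⟨hEp, hEq⟩
  rw [hpq, Submodule.mem_bot] at this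
  exact sub_eq_zero.mp this
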